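/- arXiv:2306.13605 — 5 statements merged into one kernel-verified Lean document; each statement's English description precedes it below -/
import Mathlib

section
/- Let R be a ring (associative, unital, possibly noncommutative) in which p^k·1_R = 0, where p is a prime number and k ≥ 1 is an integer. Let S be a subring of R, and let a, b ∈ S be elements such that a·b − 1 ∈ p·R and b·a − 1 ∈ p·R. Then a is a unit of R whose two-sided inverse lies in S: explicitly, the element c = b·(a·b)^{p^{k-1}−1} belongs to S and satisfies a·c = 1 and c·a = 1. -/
lemma aux_choose_dvd (p n i : ℕ) (hp : p.Prime) (hi : i ≠ 0) (hin : i ≤ p ^ n) :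
    p ^ (n + 1) ∣ (p ^ n).choose i * p ^ i := by
  set m := multiplicity p i with hm
  have hemul := Nat.Prime.emultiplicity_choose_prime_pow hp hin hi
  have hdvd1 : p ^ (n - m) ∣ (p ^ n).choose i :=
    pow_dvd_of_le_emultiplicity (le_of_eq hemul.symm)
  have hpm : p ^ m ∣ i := pow_multiplicity_dvd p i
  have hmi : m < i := by
    have h1 : m < p ^ m := Nat.lt_pow_self hp.one_lt
    have h2 : p ^ m ≤ i := Nat.le_of_dvd (Nat.pos_of_ne_zero hi) hpm
    omega
  have hmn : m ≤ n := by
    by_contra h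
    push_neg at h
    have h3 : p ^ m ≤ p ^ n := le_trans (Nat.le_of_dvd (Nat.pos_of_ne_zero hi) hpm) hin
    have h4 : p ^ n < p ^ m := Nat.pow_lt_pow_right hp.one_lt h
    omega
  have : p ^ (n + 1) ∣ p ^ (n - m) * p ^ i := by
    rw [← pow_add]
    exact pow_dvd_pow p (by omega)
  exact this.trans (mul_dvd_mul hdvd1 dvd_rfl)

lemma aux_one_add_pow (R : Type) [Ring R] (p n : ℕ) (hp : p.Prime)
    (hR : p ^ (n + 1) • (1 : R) = 0) (r : R) :
    (1 + p • r) ^ (p ^ n) = 1 := by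
  have hzero : ∀ x : R, p ^ (n + 1) • x = 0 := by
    intro x
    calc p ^ (n + 1) • x = (p ^ (n + 1) • (1 : R)) * x := by
          rw [smul_mul_assoc, one_mul]
      _ = 0 := by rw [hR, zero_mul]
  have hc : Commute (p • r) (1 : R) := Commute.one_right _
  rw [add_comm, hc.add_pow]
  rw [Finset.sum_eq_single 0]
  · simp
  · intro i hi hi0
    have hile : i ≤ p ^ n := by
      simp only [Finset.mem_range] at hi; omega
    have hdvd := aux_choose_dvd p n i hp hi0 hile
    obtain ⟨c, hc'⟩ := hdvd
    have : (p • r) ^ i * (1 : R) ^ (p ^ n - i) * ((p ^ n).choose i : ℕ) =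
        ((p ^ n).choose i * p ^ i) • r ^ i := by
      rw [smul_pow, one_pow, mul_one]
      rw [mul_comm ((p ^ n).choose i) (p ^ i), mul_smul]
      simp only [nsmul_eq_mul, Nat.cast_pow]
      rw [(Nat.cast_commute ((p ^ n).choose i) (r ^ i)).eq, mul_assoc]
    rw [this, hc', mul_smul]
    rw [hzero]
  · intro h
    simp at h

lemma aux_sandwich (R : Type) [Ring R] (a b : R) (t : ℕ) :
    b * (a * b) ^ t * a = (b * a) ^ (t + 1) := by
  induction t with
  | zero => simp
  | succ t ih =>
    rw [pow_succ' (a * b), show b * ((a * b) * (a * b) ^ t) * a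
        = (b * a) * (b * (a * b) ^ t * a) by noncomm_ring, ih, ← pow_succ']

/-- Let `R` be a (possibly noncommutative) unital ring with `pᵏ·1 = 0`, `S ⊆ R` a subring,
and `a, b ∈ S` with `a·b − 1 ∈ p·R` and `b·a − 1 ∈ p·R`. Then `c = b·(a·b)^(p^(k-1) − 1)`
lies in `S` and is a two-sided inverse of `a`. -/
theorem rational_inverse_mod_pPow (R : Type) [Ring R] (p k : ℕ) (hp : p.Prime)
    (hk : 1 ≤ k) (hR : p ^ k • (1 : R) = 0)
    (S : Subring R) (a b : R) (ha : a ∈ S) (hb : b ∈ S)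
    (hab : ∃ r : R, a * b - 1 = p • r) (hba : ∃ r : R, b * a - 1 = p • r) :
    b * (a * b) ^ (p ^ (k - 1) - 1) ∈ S ∧
      a * (b * (a * b) ^ (p ^ (k - 1) - 1)) = 1 ∧
      (b * (a * b) ^ (p ^ (k - 1) - 1)) * a = 1 := by
  set n := k - 1 with hn
  have hkn : k = n + 1 := by omega
  rw [hkn] at hR
  obtain ⟨r, hr⟩ := hab
  obtain ⟨r', hr'⟩ := hba
  have hab1 : a * b = 1 + p • r := by rw [← hr]; abel
  have hba1 : b * a = 1 + p • r' := by rw [← hr']; abel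
  have habpow : (a * b) ^ (p ^ n) = 1 := by
    rw [hab1]; exact aux_one_add_pow R p n hp hR r
  have hbapow : (b * a) ^ (p ^ n) = 1 := by
    rw [hba1]; exact aux_one_add_pow R p n hp hR r'
  have hpn : 1 ≤ p ^ n := Nat.one_le_pow n p hp.pos
  have hsucc : p ^ n - 1 + 1 = p ^ n := by omega
  refine ⟨S.mul_mem hb (S.pow_mem (S.mul_mem ha hb) _), ?_, ?_⟩
  · calc a * (b * (a * b) ^ (p ^ n - 1)) = (a * b) ^ (p ^ n - 1 + 1) := by
          rw [pow_succ', mul_assoc]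
      _ = 1 := by rw [hsucc, habpow]
  · rw [aux_sandwich, hsucc, hbapow]
end

section
/- Under hypothesis (H), the R-module M ⊗_R N is generated by J together with the image of the map N → M ⊗_R N, n ↦ 1 ⊗ n; that is, M ⊗_R N = J + (1 ⊗ N) as R-submodules. -/
open scoped TensorProduct

/-- Under hypothesis (H), the `R`-module `M ⊗[R] N` is generated by the ideal `J`
(generated by `S⁺ = S ∩ ker ε`) together with the image of `n ↦ 1 ⊗ n`. -/
theorem tensor_eq_ideal_sup_includeRight
    (R : Type) [CommRing R] (M N : Type) [CommRing M] [CommRing N]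
    [Algebra R M] [Algebra R N]
    (εM : M →ₐ[R] R) (εN : N →ₐ[R] R)
    (S : Subalgebra R (M ⊗[R] N))
    (F : ℕ → Submodule R N)
    (hF0 : F 0 = ⊤)
    (hFdesc : ∀ s : ℕ, F (s + 1) ≤ F s)
    (hF1 : ∀ y : N, y ∈ F 1 ↔ εN y = 0)
    (hFmul : ∀ s : ℕ, ∀ x ∈ F s, ∀ y ∈ F 1, x * y ∈ F (s + 1))
    (d : ℕ) (hFd : F (d + 1) = ⊥)
    (hH : ∀ a : M, ∃ (k : ℕ) (u : Fin k → M) (v : Fin k → N),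
      (∀ i, v i ∈ F 1) ∧
        (a ⊗ₜ[R] (1 : N) + ∑ i, u i ⊗ₜ[R] v i) ∈ S) :
    Submodule.restrictScalars R
        (Ideal.span {x : M ⊗[R] N |
          x ∈ S ∧ Algebra.TensorProduct.productMap εM εN x = 0}) ⊔
      LinearMap.range
        ((Algebra.TensorProduct.includeRight : N →ₐ[R] M ⊗[R] N).toLinearMap) = ⊤ := by
  set ε := Algebra.TensorProduct.productMap εM εN with hε
  set T := Submodule.restrictScalars R
        (Ideal.span {x : M ⊗[R] N | x ∈ S ∧ ε x = 0}) ⊔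
      LinearMap.range
        ((Algebra.TensorProduct.includeRight : N →ₐ[R] M ⊗[R] N).toLinearMap) with hT
  have Fanti : Antitone F := antitone_nat_of_succ_le hFdesc
  have key : ∀ k : ℕ, ∀ a : M, ∀ n ∈ F (d + 1 - k), a ⊗ₜ[R] n ∈ T := by
    intro k
    induction k with
    | zero =>
      intro a n hn
      simp only [Nat.sub_zero, hFd, Submodule.mem_bot] at hn
      simp [hn]
    | succ k ih =>
      intro a n hn
      obtain ⟨m, u, v, hv, hσ⟩ := hH a
      set σ : M ⊗[R] N := a ⊗ₜ[R] (1 : N) + ∑ i, u i ⊗ₜ[R] v i with hσdef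
      set σ' : M ⊗[R] N := σ - algebraMap R (M ⊗[R] N) (εM a) with hσ'def
      have hσ'S : σ' ∈ S := S.sub_mem hσ (S.algebraMap_mem _)
      have hεσ' : ε σ' = 0 := by
        have : ∀ i, εN (v i) = 0 := fun i => (hF1 _).mp (hv i)
        simp [hσ'def, hσdef, this, hε, Algebra.TensorProduct.productMap_apply_tmul]
      have h1 : σ' * ((1 : M) ⊗ₜ[R] n) ∈ T := by
        refine le_sup_left (α := Submodule R (M ⊗[R] N)) ?_
        exact Ideal.mul_mem_right _ _ (Ideal.subset_span ⟨hσ'S, hεσ'⟩)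
      have h2 : ∀ i, u i ⊗ₜ[R] (v i * n) ∈ T := by
        intro i
        apply ih
        have : v i * n ∈ F (d + 1 - (k + 1) + 1) := by
          rw [mul_comm]
          exact hFmul _ n hn _ (hv i)
        exact Fanti (by omega) this
      have h3 : εM a • ((1 : M) ⊗ₜ[R] n) ∈ T := by
        refine Submodule.smul_mem _ _ (le_sup_right (α := Submodule R (M ⊗[R] N)) ?_)
        exact ⟨n, rfl⟩
      have heq : a ⊗ₜ[R] n =
          σ' * ((1 : M) ⊗ₜ[R] n) - (∑ i, u i ⊗ₜ[R] (v i * n))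
            + εM a • ((1 : M) ⊗ₜ[R] n) := by
        rw [hσ'def, hσdef, sub_mul, add_mul, Finset.sum_mul, ← Algebra.smul_def]
        simp only [Algebra.TensorProduct.tmul_mul_tmul, one_mul, mul_one]
        abel
      rw [heq]
      exact T.add_mem (T.sub_mem h1 (Submodule.sum_mem _ fun i _ => h2 i)) h3
  rw [eq_top_iff]
  rintro x -
  induction x with
  | zero => exact T.zero_mem
  | tmul a n =>
    exact key (d + 1) a n (by simp [Nat.sub_self, hF0])
  | add x y hx hy => exact T.add_mem hx hy
end

section
/- Under hypothesis (H), if y ∈ N satisfies 1 ⊗ y ∈ J, then 1 ⊗ y lies in the R-submodule of M ⊗_R N spanned by the products (1 ⊗ c)·s with c ∈ N and s ∈ S⁺. -/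
open scoped TensorProduct

/-- Under hypothesis (H), if `1 ⊗ y` lies in the ideal `J` generated by
`S⁺ = S ∩ ker ε`, then `1 ⊗ y` lies in the `R`-submodule spanned by the products
`(1 ⊗ c)·s` with `c ∈ N` and `s ∈ S⁺`. -/
theorem one_tmul_mem_span_smul_of_mem_ideal
    (R : Type) [CommRing R] (M N : Type) [CommRing M] [CommRing N]
    [Algebra R M] [Algebra R N]
    (εM : M →ₐ[R] R) (εN : N →ₐ[R] R)
    (S : Subalgebra R (M ⊗[R] N))
    (F : ℕ → Submodule R N)
    (hF0 : F 0 = ⊤)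
    (hFdesc : ∀ s : ℕ, F (s + 1) ≤ F s)
    (hF1 : ∀ y : N, y ∈ F 1 ↔ εN y = 0)
    (hFmul : ∀ s : ℕ, ∀ x ∈ F s, ∀ y ∈ F 1, x * y ∈ F (s + 1))
    (d : ℕ) (hFd : F (d + 1) = ⊥)
    (hH : ∀ a : M, ∃ (k : ℕ) (u : Fin k → M) (v : Fin k → N),
      (∀ i, v i ∈ F 1) ∧
        (a ⊗ₜ[R] (1 : N) + ∑ i, u i ⊗ₜ[R] v i) ∈ S)
    (y : N)
    (hy : (1 : M) ⊗ₜ[R] y ∈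
      Ideal.span {x : M ⊗[R] N |
        x ∈ S ∧ Algebra.TensorProduct.productMap εM εN x = 0}) :
    (1 : M) ⊗ₜ[R] y ∈
      Submodule.span R {x : M ⊗[R] N | ∃ (c : N) (s : M ⊗[R] N),
        s ∈ S ∧ Algebra.TensorProduct.productMap εM εN s = 0 ∧
          x = ((1 : M) ⊗ₜ[R] c) * s} := by
  set ε := Algebra.TensorProduct.productMap εM εN with hεdef
  set T : Submodule R (M ⊗[R] N) :=
    Submodule.span R {x : M ⊗[R] N | ∃ (c : N) (s : M ⊗[R] N),
      s ∈ S ∧ ε s = 0 ∧ x = ((1 : M) ⊗ₜ[R] c) * s} with hT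
  set W : Submodule R (M ⊗[R] N) :=
    Submodule.span R {x : M ⊗[R] N | ∃ (c : N), ∃ s ∈ S,
      x = ((1 : M) ⊗ₜ[R] c) * s} with hW
  set MF : ℕ → Submodule R (M ⊗[R] N) :=
    fun k => Submodule.span R {x : M ⊗[R] N | ∃ m : M, ∃ v ∈ F k, x = m ⊗ₜ[R] v}
    with hMFdef
  -- step: MF k ≤ W ⊔ MF (k+1)
  have hstep : ∀ k, MF k ≤ W ⊔ MF (k + 1) := by
    intro k
    apply Submodule.span_le.2
    rintro x ⟨m, v, hv, rfl⟩
    obtain ⟨kk, u, vv, hvv, hs⟩ := hH m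
    have key : m ⊗ₜ[R] v =
        ((1 : M) ⊗ₜ[R] v) * (m ⊗ₜ[R] (1 : N) + ∑ i, u i ⊗ₜ[R] vv i)
          - ∑ i, u i ⊗ₜ[R] (v * vv i) := by
      rw [mul_add, Finset.mul_sum]
      simp [Algebra.TensorProduct.tmul_mul_tmul]
    rw [key]
    refine sub_mem ?_ ?_
    · exact Submodule.mem_sup_left (Submodule.subset_span ⟨v, _, hs, rfl⟩)
    · exact Submodule.mem_sup_right (Submodule.sum_mem _ fun i _ =>
        Submodule.subset_span ⟨u i, v * vv i, hFmul k v hv (vv i) (hvv i), rfl⟩)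
  have hbase : ∀ x : M ⊗[R] N, x ∈ MF 0 := by
    intro x
    induction x using TensorProduct.induction_on with
    | zero => exact Submodule.zero_mem _
    | tmul m n => exact Submodule.subset_span ⟨m, n, by simp [hF0], rfl⟩
    | add a b ha hb => exact Submodule.add_mem _ ha hb
  have hall : ∀ k, ∀ x : M ⊗[R] N, x ∈ W ⊔ MF k := by
    intro k
    induction k with
    | zero => exact fun x => Submodule.mem_sup_right (hbase x)
    | succ k ih =>
        intro x
        have h2 : W ⊔ MF k ≤ W ⊔ MF (k + 1) :=
          sup_le le_sup_left (le_trans (hstep k)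
            (sup_le le_sup_left le_sup_right))
        exact h2 (ih x)
  have hMFd : MF (d + 1) = ⊥ := by
    apply le_bot_iff.1
    apply Submodule.span_le.2
    rintro x ⟨m, v, hv, rfl⟩
    rw [hFd, Submodule.mem_bot] at hv
    simp [hv]
  have hWtop : ∀ x : M ⊗[R] N, x ∈ W := by
    intro x
    have h := hall (d + 1) x
    rwa [hMFd, sup_bot_eq] at h
  -- any a * t with t ∈ S⁺ is in T
  have hmulT : ∀ t, t ∈ S → ε t = 0 → ∀ a : M ⊗[R] N, a * t ∈ T := by
    intro t ht hεt a
    have ha := hWtop a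
    induction ha using Submodule.span_induction with
    | mem x hx =>
        obtain ⟨c, s, hsS, rfl⟩ := hx
        rw [mul_assoc]
        exact Submodule.subset_span
          ⟨c, s * t, S.mul_mem hsS ht, by simp [map_mul, hεt], rfl⟩
    | zero => simp
    | add x z _ _ hx hz => rw [add_mul]; exact Submodule.add_mem _ hx hz
    | smul r x _ hx => rw [smul_mul_assoc]; exact Submodule.smul_mem _ _ hx
  -- main induction over the ideal span
  rw [Ideal.span] at hy
  refine Submodule.span_induction (p := fun x _ => x ∈ T) ?_ ?_ ?_ ?_ hy
  · intro x hx; simpa using hmulT x hx.1 hx.2 1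
  · exact Submodule.zero_mem _
  · intro x z _ _ hx hz; exact Submodule.add_mem _ hx hz
  · intro a x hxmem hx
    simp only [smul_eq_mul]
    clear hxmem
    induction hx using Submodule.span_induction with
    | mem w hw =>
        obtain ⟨c, s, hsS, hεs, rfl⟩ := hw
        rw [← mul_assoc]
        exact hmulT s hsS hεs _
    | zero => simp
    | add w z _ _ hw hz => rw [mul_add]; exact Submodule.add_mem _ hw hz
    | smul r w _ hw => rw [mul_smul_comm]; exact Submodule.smul_mem _ _ hw
end

section
/- Under hypothesis (H) and the additional data (χ, π, T), if y ∈ N satisfies 1 ⊗ y ∈ J, then y belongs to J_N, the ideal of N generated by T ∩ ker ε_N. -/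
open scoped TensorProduct

/-- Under hypothesis (H) and the additional data `(χ, π, T)`, if `1 ⊗ y` lies in the
ideal `J` generated by `S⁺ = S ∩ ker ε`, then `y` lies in the ideal of `N` generated
by `T ∩ ker ε_N`. -/
theorem mem_idealN_of_one_tmul_mem_ideal
    (R : Type) [CommRing R] (M N : Type) [CommRing M] [CommRing N]
    [Algebra R M] [Algebra R N]
    (εM : M →ₐ[R] R) (εN : N →ₐ[R] R)
    (S : Subalgebra R (M ⊗[R] N))
    (F : ℕ → Submodule R N)
    (hF0 : F 0 = ⊤)
    (hFdesc : ∀ s : ℕ, F (s + 1) ≤ F s)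
    (hF1 : ∀ y : N, y ∈ F 1 ↔ εN y = 0)
    (hFmul : ∀ s : ℕ, ∀ x ∈ F s, ∀ y ∈ F 1, x * y ∈ F (s + 1))
    (d : ℕ) (hFd : F (d + 1) = ⊥)
    (hH : ∀ a : M, ∃ (k : ℕ) (u : Fin k → M) (v : Fin k → N),
      (∀ i, v i ∈ F 1) ∧
        (a ⊗ₜ[R] (1 : N) + ∑ i, u i ⊗ₜ[R] v i) ∈ S)
    (χ : M →ₗ[R] R) (π : M)
    (hχπ : χ π = 1)
    (hπ : ∀ m : M, εM m = 0 → π * m = 0)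
    (T : Subalgebra R N)
    (hT : ∀ x : M ⊗[R] N, x ∈ S →
      (TensorProduct.lid R N).toLinearMap.comp
        (TensorProduct.map χ (LinearMap.id : N →ₗ[R] N)) x ∈ T)
    (y : N)
    (hy : (1 : M) ⊗ₜ[R] y ∈
      Ideal.span {x : M ⊗[R] N |
        x ∈ S ∧ Algebra.TensorProduct.productMap εM εN x = 0}) :
    y ∈ Ideal.span {z : N | z ∈ T ∧ εN z = 0} := by
  classical
  set I : Ideal N := Ideal.span {z : N | z ∈ T ∧ εN z = 0} with hI
  set φ : M ⊗[R] N →ₗ[R] N :=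
    (TensorProduct.lid R N).toLinearMap.comp
      (TensorProduct.map χ (LinearMap.id : N →ₗ[R] N)) with hφ
  set μ : M ⊗[R] N →ₐ[R] M :=
    Algebra.TensorProduct.productMap (AlgHom.id R M) ((Algebra.ofId R M).comp εN) with hμ
  have hφt : ∀ (m : M) (n : N), φ (m ⊗ₜ[R] n) = χ m • n := by
    intro m n; simp [hφ]
  have hμt : ∀ (m : M) (n : N), μ (m ⊗ₜ[R] n) = εN n • m := by
    intro m n
    simp [hμ, Algebra.ofId_apply, Algebra.smul_def, mul_comm]
  have hφmul : ∀ (x : M ⊗[R] N) (n : N), φ (x * (1 : M) ⊗ₜ[R] n) = φ x * n := by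
    intro x n
    induction x using TensorProduct.induction_on with
    | zero => simp
    | tmul a b =>
      simp [Algebra.TensorProduct.tmul_mul_tmul, hφt, smul_mul_assoc]
    | add x y hx hy => simp [add_mul, hx, hy]
  have hεφ : ∀ x : M ⊗[R] N, εN (φ x) = χ (μ x) := by
    intro x
    induction x using TensorProduct.induction_on with
    | zero => simp
    | tmul a b => simp [hφt, hμt, mul_comm]
    | add x y hx hy => simp [hx, hy]
  have hεμ : ∀ x : M ⊗[R] N, εM (μ x) = Algebra.TensorProduct.productMap εM εN x := by
    intro x
    induction x using TensorProduct.induction_on with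
    | zero => simp
    | tmul a b => simp [hμt, mul_comm]
    | add x y hx hy => simp [hx, hy]
  have hanti : Antitone F := antitone_nat_of_succ_le hFdesc
  -- core downward induction on the filtration
  have key : ∀ c : ℕ, ∀ j : ℕ, d + 1 ≤ j + c → ∀ w ∈ F j, ∀ m : M,
      ∀ s ∈ S, μ s = 0 → w * φ ((m ⊗ₜ[R] (1 : N)) * s) ∈ I := by
    intro c
    induction c with
    | zero =>
      intro j hj w hw m s hs hμs
      have hw0 : w = 0 := by
        have : w ∈ F (d + 1) := hanti (by omega) hw
        rw [hFd] at this
        simpa using this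
      simp [hw0]
    | succ c ih =>
      intro j hj w hw m s hs hμs
      obtain ⟨k, u, v, hv, hσ⟩ := hH m
      set σ : M ⊗[R] N := m ⊗ₜ[R] (1 : N) + ∑ i, u i ⊗ₜ[R] v i with hσdef
      have hterm1 : w * φ (σ * s) ∈ I := by
        have htT : φ (σ * s) ∈ T := hT _ (mul_mem hσ hs)
        have htε : εN (φ (σ * s)) = 0 := by
          rw [hεφ, map_mul, hμs, mul_zero, map_zero]
        exact I.mul_mem_left w (Ideal.subset_span ⟨htT, htε⟩)
      have hterm2 : ∀ i, w * φ ((u i ⊗ₜ[R] v i) * s) ∈ I := by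
        intro i
        have h1 : (u i ⊗ₜ[R] v i) * s
            = ((u i ⊗ₜ[R] (1 : N)) * s) * ((1 : M) ⊗ₜ[R] v i) := by
          rw [show (u i ⊗ₜ[R] v i)
              = (u i ⊗ₜ[R] (1 : N)) * ((1 : M) ⊗ₜ[R] v i) by
            simp [Algebra.TensorProduct.tmul_mul_tmul]]
          ring
        have h2 : w * φ ((u i ⊗ₜ[R] v i) * s)
            = (w * v i) * φ ((u i ⊗ₜ[R] (1 : N)) * s) := by
          rw [h1, hφmul]; ring
        rw [h2]
        exact ih (j + 1) (by omega) (w * v i) (hFmul j w hw (v i) (hv i)) (u i) s hs hμs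
      have hsplit : (m ⊗ₜ[R] (1 : N)) * s = σ * s - ∑ i, (u i ⊗ₜ[R] v i) * s := by
        rw [hσdef, add_mul, Finset.sum_mul]
        ring
      rw [hsplit, map_sub, map_sum, mul_sub, Finset.mul_sum]
      exact I.sub_mem hterm1 (I.sum_mem fun i _ => hterm2 i)
  -- upgrade to arbitrary left factors
  have key' : ∀ s ∈ S, μ s = 0 → ∀ z : M ⊗[R] N, φ (z * s) ∈ I := by
    intro s hs hμs z
    induction z using TensorProduct.induction_on with
    | zero => simp
    | tmul a b =>
      have h1 : (a ⊗ₜ[R] b) * s = ((a ⊗ₜ[R] (1 : N)) * s) * ((1 : M) ⊗ₜ[R] b) := by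
        rw [show (a ⊗ₜ[R] b) = (a ⊗ₜ[R] (1 : N)) * ((1 : M) ⊗ₜ[R] b) by
          simp [Algebra.TensorProduct.tmul_mul_tmul]]
        ring
      rw [h1, hφmul]
      have h0 := key (d + 1) 0 (by omega) 1 (by rw [hF0]; trivial) a s hs hμs
      rw [one_mul] at h0
      exact I.mul_mem_right b h0
    | add x y hx hy =>
      rw [add_mul, map_add]
      exact I.add_mem hx hy
  -- the element σ attached to π
  obtain ⟨k, u, v, hv, hσ⟩ := hH π
  set σ : M ⊗[R] N := π ⊗ₜ[R] (1 : N) + ∑ i, u i ⊗ₜ[R] v i with hσdef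
  have hμσ : μ σ = π := by
    have hv0 : ∀ i, εN (v i) = 0 := fun i => (hF1 _).mp (hv i)
    simp [hσdef, hμt, hv0]
  -- main span induction
  have main : ∀ x ∈ Ideal.span {x : M ⊗[R] N |
      x ∈ S ∧ Algebra.TensorProduct.productMap εM εN x = 0},
      ∀ z : M ⊗[R] N, φ (σ * (z * x)) ∈ I := by
    intro x hx
    refine Submodule.span_induction
      (p := fun x _ => ∀ z : M ⊗[R] N, φ (σ * (z * x)) ∈ I) ?_ ?_ ?_ ?_ hx
    · rintro g ⟨hgS, hgε⟩ z
      have hs' : σ * g ∈ S := mul_mem hσ hgS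
      have hμs' : μ (σ * g) = 0 := by
        rw [map_mul, hμσ]
        exact hπ (μ g) (by rw [hεμ]; exact hgε)
      have heq : σ * (z * g) = z * (σ * g) := by ring
      rw [heq]
      exact key' (σ * g) hs' hμs' z
    · intro z; simp
    · intro a b _ _ ha hb z
      have : σ * (z * (a + b)) = σ * (z * a) + σ * (z * b) := by ring
      rw [this, map_add]
      exact I.add_mem (ha z) (hb z)
    · intro c a _ hca z
      have : σ * (z * (c • a)) = σ * ((z * c) * a) := by
        rw [smul_eq_mul]; ring
      rw [this]
      exact hca (z * c)
  have hy' := main _ hy 1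
  rw [one_mul] at hy'
  have h1 : φ (σ * ((1 : M) ⊗ₜ[R] y)) = φ σ * y := hφmul σ y
  have he : φ σ - 1 ∈ I := by
    refine Ideal.subset_span ⟨T.sub_mem (hT σ hσ) T.one_mem, ?_⟩
    rw [map_sub, hεφ, hμσ, hχπ, map_one, sub_self]
  have hyeq : y = φ σ * y - (φ σ - 1) * y := by ring
  rw [hyeq]
  exact I.sub_mem (h1 ▸ hy') (I.mul_mem_right y he)
end

section
/- Under hypothesis (H) and the additional data (χ, π, T), and assuming moreover that 1 ⊗ t ∈ S for every t ∈ T, the R-algebra homomorphism N → M ⊗_R N, n ↦ 1 ⊗ n, induces an isomorphism of R-algebras N/J_N ≅ (M ⊗_R N)/J. -/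
open scoped TensorProduct

/-- Under hypothesis (H), the additional data `(χ, π, T)`, and assuming `1 ⊗ t ∈ S` for
every `t ∈ T`, the `R`-algebra map `N → M ⊗[R] N`, `n ↦ 1 ⊗ n`, induces an isomorphism
of `R`-algebras `N/J_N ≅ (M ⊗[R] N)/J`. -/
theorem quotient_algEquiv_of_split
    (R : Type) [CommRing R] (M N : Type) [CommRing M] [CommRing N]
    [Algebra R M] [Algebra R N]
    (εM : M →ₐ[R] R) (εN : N →ₐ[R] R)
    (S : Subalgebra R (M ⊗[R] N))
    (F : ℕ → Submodule R N)
    (hF0 : F 0 = ⊤)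
    (hFdesc : ∀ s : ℕ, F (s + 1) ≤ F s)
    (hF1 : ∀ y : N, y ∈ F 1 ↔ εN y = 0)
    (hFmul : ∀ s : ℕ, ∀ x ∈ F s, ∀ y ∈ F 1, x * y ∈ F (s + 1))
    (d : ℕ) (hFd : F (d + 1) = ⊥)
    (hH : ∀ a : M, ∃ (k : ℕ) (u : Fin k → M) (v : Fin k → N),
      (∀ i, v i ∈ F 1) ∧
        (a ⊗ₜ[R] (1 : N) + ∑ i, u i ⊗ₜ[R] v i) ∈ S)
    (χ : M →ₗ[R] R) (π : M)
    (hχπ : χ π = 1)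
    (hπ : ∀ m : M, εM m = 0 → π * m = 0)
    (T : Subalgebra R N)
    (hT : ∀ x : M ⊗[R] N, x ∈ S →
      (TensorProduct.lid R N).toLinearMap.comp
        (TensorProduct.map χ (LinearMap.id : N →ₗ[R] N)) x ∈ T)
    (hTS : ∀ t : N, t ∈ T → (1 : M) ⊗ₜ[R] t ∈ S) :
    ∃ e : (N ⧸ Ideal.span {z : N | z ∈ T ∧ εN z = 0}) ≃ₐ[R]
        ((M ⊗[R] N) ⧸ Ideal.span {x : M ⊗[R] N |
          x ∈ S ∧ Algebra.TensorProduct.productMap εM εN x = 0}),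
      ∀ n : N,
        e (Ideal.Quotient.mk (Ideal.span {z : N | z ∈ T ∧ εN z = 0}) n) =
          Ideal.Quotient.mk
            (Ideal.span {x : M ⊗[R] N |
              x ∈ S ∧ Algebra.TensorProduct.productMap εM εN x = 0})
            ((1 : M) ⊗ₜ[R] n) := by
  classical
  set ε : M ⊗[R] N →ₐ[R] R := Algebra.TensorProduct.productMap εM εN with hεdef
  set χl : M ⊗[R] N →ₗ[R] N :=
    (TensorProduct.lid R N).toLinearMap.comp
      (TensorProduct.map χ (LinearMap.id : N →ₗ[R] N)) with hχldef
  set J : Ideal (M ⊗[R] N) :=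
    Ideal.span {x : M ⊗[R] N | x ∈ S ∧ ε x = 0} with hJdef
  set JN : Ideal N := Ideal.span {z : N | z ∈ T ∧ εN z = 0} with hJNdef
  -- basic computation lemmas
  have chl_tmul : ∀ (m : M) (n : N), χl (m ⊗ₜ[R] n) = χ m • n := by
    intro m n; simp [hχldef]
  have chl_mul : ∀ (x : M ⊗[R] N) (w : N),
      χl (x * ((1 : M) ⊗ₜ[R] w)) = χl x * w := by
    intro x w
    induction x using TensorProduct.induction_on with
    | zero => simp
    | tmul m n =>
        rw [Algebra.TensorProduct.tmul_mul_tmul, mul_one, chl_tmul, chl_tmul,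
          smul_mul_assoc]
    | add x y hx hy => rw [add_mul, map_add, map_add, hx, hy, add_mul]
  -- the algebra map (id ⊗ εN) : M ⊗ N → M
  set q : M ⊗[R] N →ₐ[R] M :=
    Algebra.TensorProduct.productMap (AlgHom.id R M)
      ((Algebra.ofId R M).comp εN) with hqdef
  have q_tmul : ∀ (m : M) (n : N), q (m ⊗ₜ[R] n) = εN n • m := by
    intro m n
    simp [hqdef, Algebra.TensorProduct.productMap_apply_tmul, Algebra.ofId_apply,
      Algebra.smul_def, mul_comm]
  have eps_q : ∀ x : M ⊗[R] N, ε x = εM (q x) := by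
    intro x
    induction x using TensorProduct.induction_on with
    | zero => simp
    | tmul m n =>
        rw [q_tmul, map_smul, hεdef, Algebra.TensorProduct.productMap_apply_tmul,
          smul_eq_mul, mul_comm]
    | add x y hx hy => rw [map_add, map_add, map_add, hx, hy]
  have epsN_chl : ∀ x : M ⊗[R] N, εN (χl x) = χ (q x) := by
    intro x
    induction x using TensorProduct.induction_on with
    | zero => simp
    | tmul m n =>
        rw [chl_tmul, q_tmul, map_smul, map_smul, smul_eq_mul, smul_eq_mul, mul_comm]
    | add x y hx hy => rw [map_add, map_add, map_add, map_add, hx, hy]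
  -- the special element p coming from hypothesis (H) applied to π
  obtain ⟨k, u, v, hv, hpS⟩ := hH π
  set p : M ⊗[R] N := π ⊗ₜ[R] (1 : N) + ∑ i, u i ⊗ₜ[R] v i with hpdef
  have hvN0 : ∀ i, εN (v i) = 0 := fun i => (hF1 _).mp (hv i)
  have hqp : q p = π := by
    rw [hpdef, map_add, map_sum, q_tmul]
    simp [q_tmul, hvN0]
  set f : N := ∑ i, χ (u i) • v i with hfdef
  have hfF1 : f ∈ F 1 := Submodule.sum_mem _ fun i _ => Submodule.smul_mem _ _ (hv i)
  have chlp : χl p = 1 + f := by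
    rw [hpdef, map_add, map_sum, chl_tmul, hχπ, one_smul, hfdef]
    simp [chl_tmul]
  -- ρ'(s) := χl (p * s) lands in the generators of JN for s ∈ S⁺
  have rho_mem : ∀ s : M ⊗[R] N, s ∈ S → ε s = 0 → χl (p * s) ∈ JN := by
    intro s hs hεs
    apply Ideal.subset_span
    refine ⟨hT _ (mul_mem hpS hs), ?_⟩
    have h1 : εM (q s) = 0 := by rw [← eps_q]; exact hεs
    rw [epsN_chl, map_mul, hqp, hπ (q s) h1, map_zero]
  -- the auxiliary R-span
  set Ispan : Submodule R (M ⊗[R] N) :=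
    Submodule.span R {y : M ⊗[R] N | ∃ (w : N) (s : M ⊗[R] N),
      s ∈ S ∧ ε s = 0 ∧ y = s * ((1 : M) ⊗ₜ[R] w)} with hIdef
  have MULW : ∀ x ∈ Ispan, ∀ w : N, x * ((1 : M) ⊗ₜ[R] w) ∈ Ispan := by
    intro x hx
    induction hx using Submodule.span_induction with
    | mem y hy =>
        intro w
        obtain ⟨w', s, hs, hεs, rfl⟩ := hy
        rw [mul_assoc, Algebra.TensorProduct.tmul_mul_tmul, one_mul]
        exact Submodule.subset_span ⟨w' * w, s, hs, hεs, rfl⟩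
    | zero => intro w; rw [zero_mul]; exact zero_mem _
    | add x y hx hy ihx ihy =>
        intro w; rw [add_mul]; exact add_mem (ihx w) (ihy w)
    | smul r x hx ih =>
        intro w; rw [smul_mul_assoc]; exact Submodule.smul_mem _ _ (ih w)
  -- index arithmetic for the descending induction
  have harith : ∀ (j : ℕ) (x y : N), x ∈ F (d + 1 - (j + 1)) → y ∈ F 1 →
      y * x ∈ F (d + 1 - j) := by
    intro j x y hx hy
    rcases le_or_gt j d with h | h
    · have e1 : d + 1 - (j + 1) = d - j := by omega
      have e2 : (d - j) + 1 = d + 1 - j := by omega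
      have := hFmul (d - j) x (by rwa [e1] at hx) y hy
      rw [e2] at this; rwa [mul_comm]
    · have h0 : d + 1 - j = 0 := by omega
      rw [h0, hF0]; exact Submodule.mem_top
  -- key claim: (a ⊗ v) * s ∈ Ispan for s ∈ S⁺
  have KEY : ∀ (j : ℕ) (a : M) (vv : N), vv ∈ F (d + 1 - j) →
      ∀ s : M ⊗[R] N, s ∈ S → ε s = 0 → (a ⊗ₜ[R] vv) * s ∈ Ispan := by
    intro j
    induction j with
    | zero =>
        intro a vv hvv s hs hεs
        rw [Nat.sub_zero, hFd, Submodule.mem_bot] at hvv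
        rw [hvv, TensorProduct.tmul_zero, zero_mul]
        exact zero_mem _
    | succ j ih =>
        intro a vv hvv s hs hεs
        obtain ⟨k', u', v', hv', hpa⟩ := hH a
        set pa : M ⊗[R] N := a ⊗ₜ[R] (1 : N) + ∑ i, u' i ⊗ₜ[R] v' i with hpadef
        have expand : pa * ((1 : M) ⊗ₜ[R] vv)
            = a ⊗ₜ[R] vv + ∑ i, u' i ⊗ₜ[R] (v' i * vv) := by
          rw [hpadef, add_mul, Finset.sum_mul]
          simp [Algebra.TensorProduct.tmul_mul_tmul]
        have key_eq : (a ⊗ₜ[R] vv) * s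
            = (pa * s) * ((1 : M) ⊗ₜ[R] vv)
              - ∑ i, (u' i ⊗ₜ[R] (v' i * vv)) * s := by
          have h2 : a ⊗ₜ[R] vv
              = pa * ((1 : M) ⊗ₜ[R] vv) - ∑ i, u' i ⊗ₜ[R] (v' i * vv) := by
            rw [expand]; ring
          rw [h2, sub_mul, Finset.sum_mul]
          ring
        rw [key_eq]
        refine sub_mem ?_ ?_
        · exact Submodule.subset_span
            ⟨vv, pa * s, mul_mem hpa hs, by rw [map_mul, hεs, mul_zero], rfl⟩
        · refine Submodule.sum_mem _ fun i _ => ?_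
          exact ih (u' i) (v' i * vv) (harith j vv (v' i) hvv (hv' i)) s hs hεs
  have KEYALL : ∀ (x s : M ⊗[R] N), s ∈ S → ε s = 0 → x * s ∈ Ispan := by
    intro x
    induction x using TensorProduct.induction_on with
    | zero => intro s hs hεs; rw [zero_mul]; exact zero_mem _
    | tmul m n =>
        intro s hs hεs
        exact KEY (d + 1) m n (by rw [Nat.sub_self, hF0]; exact Submodule.mem_top) s hs hεs
    | add x y hx hy =>
        intro s hs hεs
        rw [add_mul]; exact add_mem (hx s hs hεs) (hy s hs hεs)
  have MULA : ∀ (a x : M ⊗[R] N), x ∈ Ispan → a * x ∈ Ispan := by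
    intro a x hx
    induction hx using Submodule.span_induction with
    | mem y hy =>
        obtain ⟨w, s, hs, hεs, rfl⟩ := hy
        rw [← mul_assoc]
        exact MULW _ (KEYALL a s hs hεs) w
    | zero => rw [mul_zero]; exact zero_mem _
    | add x y hx hy ihx ihy => rw [mul_add]; exact add_mem ihx ihy
    | smul r y hy ih => rw [mul_smul_comm]; exact Submodule.smul_mem _ _ ih
  have JsubI : ∀ x ∈ J, x ∈ Ispan := by
    intro x hx
    rw [hJdef] at hx
    induction hx using Submodule.span_induction with
    | mem y hy =>
        exact Submodule.subset_span
          ⟨1, y, hy.1, hy.2, by rw [← Algebra.TensorProduct.one_def, mul_one]⟩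
    | zero => exact zero_mem _
    | add x y hx hy ihx ihy => exact add_mem ihx ihy
    | smul a y hy ih => rw [smul_eq_mul]; exact MULA a y ih
  have rhoJ : ∀ x ∈ J, χl (p * x) ∈ JN := by
    intro x hx
    have hx' := JsubI x hx
    clear hx
    induction hx' using Submodule.span_induction with
    | mem y hy =>
        obtain ⟨w, s, hs, hεs, rfl⟩ := hy
        rw [← mul_assoc, chl_mul]
        exact Ideal.mul_mem_right _ _ (rho_mem s hs hεs)
    | zero => rw [mul_zero, map_zero]; exact zero_mem _
    | add x y hx hy ihx ihy => rw [mul_add, map_add]; exact add_mem ihx ihy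
    | smul r y hy ih =>
        rw [mul_smul_comm, map_smul]
        exact Submodule.smul_of_tower_mem _ r ih
  -- powers of -f
  have powF : ∀ kk : ℕ, (-f) ^ kk ∈ F kk := by
    intro kk
    induction kk with
    | zero => rw [pow_zero, hF0]; exact Submodule.mem_top
    | succ kk ih => rw [pow_succ]; exact hFmul kk _ ih _ (neg_mem hfF1)
  have step : ∀ m' : N, (1 : M) ⊗ₜ[R] m' ∈ J → m' + f * m' ∈ JN := by
    intro m' hm'
    have h := rhoJ _ hm'
    rwa [chl_mul, chlp, add_mul, one_mul] at h
  -- injectivity key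
  have injkey : ∀ n : N, (1 : M) ⊗ₜ[R] n ∈ J → n ∈ JN := by
    intro n hn
    have iter : ∀ kk : ℕ,
        ((1 : M) ⊗ₜ[R] ((-f) ^ kk * n) ∈ J) ∧ (n - (-f) ^ kk * n ∈ JN) := by
      intro kk
      induction kk with
      | zero =>
          constructor
          · simpa using hn
          · simpa using zero_mem JN
      | succ kk ih =>
          obtain ⟨hJmem, hJNmem⟩ := ih
          have h1 := step _ hJmem
          have heq : (-f) ^ kk * n + f * ((-f) ^ kk * n)
              = (-f) ^ kk * n - (-f) ^ (kk + 1) * n := by ring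
          rw [heq] at h1
          constructor
          · have htm : (1 : M) ⊗ₜ[R] ((-f) ^ (kk + 1) * n)
                = ((1 : M) ⊗ₜ[R] (-f)) * ((1 : M) ⊗ₜ[R] ((-f) ^ kk * n)) := by
              rw [Algebra.TensorProduct.tmul_mul_tmul, one_mul]
              ring_nf
            rw [htm]
            exact Ideal.mul_mem_left _ _ hJmem
          · have h2 := add_mem hJNmem h1
            simpa using h2
    have h2 := (iter (d + 1)).2
    have h3 : (-f) ^ (d + 1) = 0 := by
      have := powF (d + 1)
      rw [hFd, Submodule.mem_bot] at this
      exact this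
    rw [h3] at h2
    simpa using h2
  -- surjectivity key
  have surjkey : ∀ (j : ℕ) (a : M) (vv : N), vv ∈ F (d + 1 - j) →
      ∃ n : N, a ⊗ₜ[R] vv - (1 : M) ⊗ₜ[R] n ∈ J := by
    intro j
    induction j with
    | zero =>
        intro a vv hvv
        rw [Nat.sub_zero, hFd, Submodule.mem_bot] at hvv
        exact ⟨0, by rw [hvv, TensorProduct.tmul_zero, TensorProduct.tmul_zero,
          sub_zero]; exact zero_mem _⟩
    | succ j ih =>
        intro a vv hvv
        obtain ⟨k', u', v', hv', hpa⟩ := hH a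
        set pa : M ⊗[R] N := a ⊗ₜ[R] (1 : N) + ∑ i, u' i ⊗ₜ[R] v' i with hpadef
        choose n' hn' using fun i : Fin k' =>
          ih (u' i) (v' i * vv) (harith j vv (v' i) hvv (hv' i))
        refine ⟨ε pa • vv - ∑ i, n' i, ?_⟩
        have expand : pa * ((1 : M) ⊗ₜ[R] vv)
            = a ⊗ₜ[R] vv + ∑ i, u' i ⊗ₜ[R] (v' i * vv) := by
          rw [hpadef, add_mul, Finset.sum_mul]
          simp [Algebra.TensorProduct.tmul_mul_tmul]
        have halg : (algebraMap R (M ⊗[R] N) (ε pa)) * ((1 : M) ⊗ₜ[R] vv)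
            = (1 : M) ⊗ₜ[R] (ε pa • vv) := by
          rw [← Algebra.smul_def, TensorProduct.tmul_smul]
        have main : a ⊗ₜ[R] vv - (1 : M) ⊗ₜ[R] (ε pa • vv - ∑ i, n' i)
            = (pa - algebraMap R (M ⊗[R] N) (ε pa)) * ((1 : M) ⊗ₜ[R] vv)
              - ∑ i, (u' i ⊗ₜ[R] (v' i * vv) - (1 : M) ⊗ₜ[R] n' i) := by
          rw [sub_mul, expand, halg]
          rw [TensorProduct.tmul_sub]
          rw [TensorProduct.tmul_sum]
          rw [Finset.sum_sub_distrib]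
          abel
        rw [main]
        refine sub_mem ?_ (Submodule.sum_mem _ fun i _ => hn' i)
        refine Ideal.mul_mem_right _ _ ?_
        apply Ideal.subset_span
        refine ⟨sub_mem hpa (Subalgebra.algebraMap_mem S (ε pa)), ?_⟩
        rw [map_sub, AlgHom.commutes]
        simp
  have SURJALL : ∀ x : M ⊗[R] N, ∃ n : N, x - (1 : M) ⊗ₜ[R] n ∈ J := by
    intro x
    induction x using TensorProduct.induction_on with
    | zero => exact ⟨0, by rw [TensorProduct.tmul_zero, sub_zero]; exact zero_mem _⟩
    | tmul m n =>
        exact surjkey (d + 1) m n (by rw [Nat.sub_self, hF0]; exact Submodule.mem_top)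
    | add x y hx hy =>
        obtain ⟨n1, h1⟩ := hx
        obtain ⟨n2, h2⟩ := hy
        refine ⟨n1 + n2, ?_⟩
        have : x + y - (1 : M) ⊗ₜ[R] (n1 + n2)
            = (x - (1 : M) ⊗ₜ[R] n1) + (y - (1 : M) ⊗ₜ[R] n2) := by
          rw [TensorProduct.tmul_add]; ring
        rw [this]
        exact add_mem h1 h2
  -- the algebra map N → (M ⊗ N)/J
  set φ0 : N →ₐ[R] (M ⊗[R] N) ⧸ J :=
    (Ideal.Quotient.mkₐ R J).comp Algebra.TensorProduct.includeRight with hφ0def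
  have memJ : ∀ z ∈ JN, (1 : M) ⊗ₜ[R] z ∈ J := by
    intro z hz
    rw [hJNdef] at hz
    induction hz using Submodule.span_induction with
    | mem y hy =>
        apply Ideal.subset_span
        refine ⟨hTS y hy.1, ?_⟩
        rw [hεdef, Algebra.TensorProduct.productMap_apply_tmul, hy.2, mul_zero]
    | zero => rw [TensorProduct.tmul_zero]; exact zero_mem _
    | add y z hy hz ihy ihz => rw [TensorProduct.tmul_add]; exact add_mem ihy ihz
    | smul r y hy ih =>
        rw [smul_eq_mul]
        have : (1 : M) ⊗ₜ[R] (r * y)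
            = ((1 : M) ⊗ₜ[R] r) * ((1 : M) ⊗ₜ[R] y) := by
          rw [Algebra.TensorProduct.tmul_mul_tmul, one_mul]
        rw [this]
        exact Ideal.mul_mem_left _ _ ih
  have hker : ∀ z : N, z ∈ JN → φ0 z = 0 := by
    intro z hz
    have : φ0 z = Ideal.Quotient.mk J ((1 : M) ⊗ₜ[R] z) := rfl
    rw [this, Ideal.Quotient.eq_zero_iff_mem]
    exact memJ z hz
  set φ : (N ⧸ JN) →ₐ[R] (M ⊗[R] N) ⧸ J := Ideal.Quotient.liftₐ JN φ0 hker with hφdef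
  have φ_mk : ∀ n : N,
      φ (Ideal.Quotient.mk JN n) = Ideal.Quotient.mk J ((1 : M) ⊗ₜ[R] n) := by
    intro n
    rw [hφdef, Ideal.Quotient.liftₐ_apply]
    rfl
  have hsurj : Function.Surjective φ := by
    intro y
    obtain ⟨x, rfl⟩ := Ideal.Quotient.mk_surjective y
    obtain ⟨n, hn⟩ := SURJALL x
    exact ⟨Ideal.Quotient.mk JN n, by rw [φ_mk]; exact (Ideal.Quotient.eq.mpr hn).symm⟩
  have hinj : Function.Injective φ := by
    rw [injective_iff_map_eq_zero]
    intro a ha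
    obtain ⟨n, rfl⟩ := Ideal.Quotient.mk_surjective a
    rw [φ_mk] at ha
    have h1 : (1 : M) ⊗ₜ[R] n ∈ J := Ideal.Quotient.eq_zero_iff_mem.mp ha
    exact Ideal.Quotient.eq_zero_iff_mem.mpr (injkey n h1)
  exact ⟨AlgEquiv.ofBijective φ ⟨hinj, hsurj⟩, fun n => φ_mk n⟩
end
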